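/- The function u(v) = μ / √(cos(√2 v + ν)), defined on an interval where cos(√2 v + ν) > 0 and μ > 0, satisfies the differential equation u ü = 3 u̇² + u². -/

import Mathlib

open Real

private theorem aux_hda13 (μ ν : ℝ) (v : ℝ) (hv : 0 < Real.cos (Real.sqrt 2 * v + ν)) :
    HasDerivAt (fun w => μ / Real.sqrt (Real.cos (Real.sqrt 2 * w + ν)))
      (μ * Real.sqrt 2 * Real.sin (Real.sqrt 2 * v + ν) /
        (2 * (Real.cos (Real.sqrt 2 * v + ν) * Real.sqrt (Real.cos (Real.sqrt 2 * v + ν))))) v := by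
  set θ := Real.sqrt 2 * v + ν with hθ
  have hθd : HasDerivAt (fun w => Real.sqrt 2 * w + ν) (Real.sqrt 2) v := by
    simpa using ((hasDerivAt_id v).const_mul (Real.sqrt 2)).add_const ν
  have hc : HasDerivAt (fun w => Real.cos (Real.sqrt 2 * w + ν))
      (-Real.sin θ * Real.sqrt 2) v := by have h := (Real.hasDerivAt_cos θ).comp v hθd; exact h
  have hcne : Real.cos θ ≠ 0 := ne_of_gt hv
  have hs : HasDerivAt (fun w => Real.sqrt (Real.cos (Real.sqrt 2 * w + ν)))
      (1 / (2 * Real.sqrt (Real.cos θ)) * (-Real.sin θ * Real.sqrt 2)) v :=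
    (Real.hasDerivAt_sqrt hcne).comp v hc
  have hsne : Real.sqrt (Real.cos θ) ≠ 0 := by positivity
  have := (hasDerivAt_const v μ).div hs hsne
  refine this.congr_deriv (Eq.symm ?_)
  have hmul : Real.sqrt (Real.cos θ) * Real.sqrt (Real.cos θ) = Real.cos θ :=
    Real.mul_self_sqrt hv.le
  rw [← hθ]
  field_simp
  rw [Real.sq_sqrt hv.le]
  ring_nf

private theorem aux_hdg13 (μ ν : ℝ) (v : ℝ) (hv : 0 < Real.cos (Real.sqrt 2 * v + ν)) :
    HasDerivAt (fun w => μ * Real.sqrt 2 * Real.sin (Real.sqrt 2 * w + ν) /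
        (2 * (Real.cos (Real.sqrt 2 * w + ν) * Real.sqrt (Real.cos (Real.sqrt 2 * w + ν)))))
      (μ * (2 * Real.cos (Real.sqrt 2 * v + ν) ^ 2 + 3 * Real.sin (Real.sqrt 2 * v + ν) ^ 2) /
        (2 * Real.cos (Real.sqrt 2 * v + ν) ^ 2 * Real.sqrt (Real.cos (Real.sqrt 2 * v + ν)))) v := by
  set θ := Real.sqrt 2 * v + ν with hθ
  have hθd : HasDerivAt (fun w => Real.sqrt 2 * w + ν) (Real.sqrt 2) v := by
    simpa using ((hasDerivAt_id v).const_mul (Real.sqrt 2)).add_const ν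
  have hc : HasDerivAt (fun w => Real.cos (Real.sqrt 2 * w + ν))
      (-Real.sin θ * Real.sqrt 2) v := by have h := (Real.hasDerivAt_cos θ).comp v hθd; exact h
  have hsin : HasDerivAt (fun w => Real.sin (Real.sqrt 2 * w + ν))
      (Real.cos θ * Real.sqrt 2) v := by have h := (Real.hasDerivAt_sin θ).comp v hθd; exact h
  have hcne : Real.cos θ ≠ 0 := ne_of_gt hv
  have hs : HasDerivAt (fun w => Real.sqrt (Real.cos (Real.sqrt 2 * w + ν)))
      (1 / (2 * Real.sqrt (Real.cos θ)) * (-Real.sin θ * Real.sqrt 2)) v :=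
    (Real.hasDerivAt_sqrt hcne).comp v hc
  have hsne : Real.sqrt (Real.cos θ) ≠ 0 := by positivity
  have hN : HasDerivAt (fun w => μ * Real.sqrt 2 * Real.sin (Real.sqrt 2 * w + ν))
      (μ * Real.sqrt 2 * (Real.cos θ * Real.sqrt 2)) v := hsin.const_mul _
  have hD : HasDerivAt (fun w => 2 * (Real.cos (Real.sqrt 2 * w + ν) *
      Real.sqrt (Real.cos (Real.sqrt 2 * w + ν))))
      (2 * ((-Real.sin θ * Real.sqrt 2) * Real.sqrt (Real.cos θ) +
        Real.cos θ * (1 / (2 * Real.sqrt (Real.cos θ)) * (-Real.sin θ * Real.sqrt 2)))) v :=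
    (hc.mul hs).const_mul 2
  have hDne : 2 * (Real.cos θ * Real.sqrt (Real.cos θ)) ≠ 0 := by positivity
  have := hN.div hD hDne
  refine this.congr_deriv (Eq.symm ?_)
  rw [← hθ]
  set r := Real.sqrt 2 with hrdef
  set S := Real.sqrt (Real.cos θ) with hSdef
  set s := Real.sin θ
  have hr : r * r = 2 := Real.mul_self_sqrt (by norm_num)
  have hS : S * S = Real.cos θ := Real.mul_self_sqrt hv.le
  rw [← hS]
  have hSne : S ≠ 0 := hsne
  field_simp
  linear_combination (-(μ*(2*S^4+3*s^2))) * hr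

theorem stmt13 (μ ν : ℝ) (hμ : 0 < μ) :
    ∀ v : ℝ, 0 < Real.cos (Real.sqrt 2 * v + ν) →
      (fun w => μ / Real.sqrt (Real.cos (Real.sqrt 2 * w + ν))) v *
          deriv (deriv (fun w => μ / Real.sqrt (Real.cos (Real.sqrt 2 * w + ν)))) v =
        3 * (deriv (fun w => μ / Real.sqrt (Real.cos (Real.sqrt 2 * w + ν))) v) ^ 2 +
          ((fun w => μ / Real.sqrt (Real.cos (Real.sqrt 2 * w + ν))) v) ^ 2 := by
  intro v hv
  have hopen : IsOpen {w : ℝ | 0 < Real.cos (Real.sqrt 2 * w + ν)} :=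
    isOpen_lt continuous_const (Real.continuous_cos.comp (by continuity))
  have hev : ∀ᶠ w in nhds v, 0 < Real.cos (Real.sqrt 2 * w + ν) :=
    hopen.mem_nhds hv
  have hderiv1 : deriv (fun w => μ / Real.sqrt (Real.cos (Real.sqrt 2 * w + ν)))
      =ᶠ[nhds v] (fun w => μ * Real.sqrt 2 * Real.sin (Real.sqrt 2 * w + ν) /
        (2 * (Real.cos (Real.sqrt 2 * w + ν) * Real.sqrt (Real.cos (Real.sqrt 2 * w + ν))))) :=
    hev.mono fun w hw => (aux_hda13 μ ν w hw).deriv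
  have hd1 : deriv (fun w => μ / Real.sqrt (Real.cos (Real.sqrt 2 * w + ν))) v =
      μ * Real.sqrt 2 * Real.sin (Real.sqrt 2 * v + ν) /
        (2 * (Real.cos (Real.sqrt 2 * v + ν) * Real.sqrt (Real.cos (Real.sqrt 2 * v + ν)))) :=
    (aux_hda13 μ ν v hv).deriv
  have hd2 : deriv (deriv (fun w => μ / Real.sqrt (Real.cos (Real.sqrt 2 * w + ν)))) v =
      μ * (2 * Real.cos (Real.sqrt 2 * v + ν) ^ 2 + 3 * Real.sin (Real.sqrt 2 * v + ν) ^ 2) /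
        (2 * Real.cos (Real.sqrt 2 * v + ν) ^ 2 * Real.sqrt (Real.cos (Real.sqrt 2 * v + ν))) := by
    rw [hderiv1.deriv_eq]
    exact (aux_hdg13 μ ν v hv).deriv
  simp only [hd1, hd2]
  set θ := Real.sqrt 2 * v + ν with hθ
  set r := Real.sqrt 2 with hrdef
  set S := Real.sqrt (Real.cos θ) with hSdef
  set s := Real.sin θ
  have hr : r * r = 2 := Real.mul_self_sqrt (by norm_num)
  have hS : S * S = Real.cos θ := Real.mul_self_sqrt hv.le
  have hSne : S ≠ 0 := by
    rw [hSdef]; positivity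
  rw [← hS]
  field_simp
  linear_combination (-3*s^2) * hr
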